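/- Let u, v ∈ ℝ^D be unit vectors with correlation ρ = ⟨u, v⟩, and let r = (r₁, …, r_D) have i.i.d. standard normal coordinates. Then for every γ ≥ 0, E[ cos(√γ Σ_i u_i r_i) · cos(√γ Σ_i v_i r_i) ] = (1/2) e^{-γ(1-ρ)} + (1/2) e^{-γ(1+ρ)} = fRBF(γ, ρ). Hence averaging products of such cosine features over independent samples of r gives an unbiased linearization of the folded RBF kernel. -/

import Mathlib

open MeasureTheory ProbabilityTheory Finset Real
open scoped NNReal ENNReal

/-- The folded RBF kernel with parameter `γ` evaluated at correlation `ρ`: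
`fRBF(γ, ρ) = (1/2) e^{-γ(1-ρ)} + (1/2) e^{-γ(1+ρ)}`. -/
noncomputable def fRBF (γ ρ : ℝ) : ℝ :=
  (1 / 2) * Real.exp (-γ * (1 - ρ)) + (1 / 2) * Real.exp (-γ * (1 + ρ))

/-- Let `u, v ∈ ℝ^D` be unit vectors with correlation `ρ = ⟨u, v⟩`, and let `r`
have i.i.d. standard normal coordinates.  Then for every `γ ≥ 0`,
`E[cos(√γ ∑ᵢ uᵢ rᵢ) · cos(√γ ∑ᵢ vᵢ rᵢ)] = (1/2) e^{-γ(1-ρ)} + (1/2) e^{-γ(1+ρ)}`,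
i.e. the cosine features give an unbiased linearization of the folded RBF kernel. -/

lemma charGauss1 (t : ℝ) :
    ∫ x : ℝ, Complex.exp ((t * x : ℝ) * Complex.I) ∂(gaussianReal 0 1)
      = Complex.exp (-((t ^ 2 : ℝ) : ℂ) / 2) := by
  rw [gaussianReal_of_var_ne_zero 0 one_ne_zero]
  have hd : gaussianPDF 0 1
      = fun x => ((Real.toNNReal (gaussianPDFReal 0 1 x) : ℝ≥0) : ℝ≥0∞) := by
    ext x; rfl
  rw [hd, integral_withDensity_eq_integral_smul
    ((measurable_gaussianPDFReal 0 1).real_toNNReal)]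
  have key : ∀ x : ℝ, (Real.toNNReal (gaussianPDFReal 0 1 x)) • Complex.exp ((t * x : ℝ) * Complex.I)
      = ((Real.sqrt (2 * π) : ℝ) : ℂ)⁻¹ *
        (Complex.exp (Complex.I * t * x) * Complex.exp (-(1/2 : ℂ) * x ^ 2)) := by
    intro x
    rw [NNReal.smul_def, Real.coe_toNNReal _ (gaussianPDFReal_nonneg 0 1 x), gaussianPDFReal]
    simp only [mul_one, sub_zero, NNReal.coe_one]
    rw [Complex.real_smul]
    push_cast
    rw [mul_assoc, ← Complex.exp_add, ← Complex.exp_add]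
    congr 1
    ring
  simp_rw [key, integral_const_mul]
  rw [fourierIntegral_gaussian (by norm_num : (0:ℝ) < ((1:ℂ)/2).re) (t : ℂ)]
  have h2 : ((π : ℂ) / (1/2)) = ((2 * π : ℝ) : ℂ) := by push_cast; ring
  have h4 : ((2 * π : ℝ) : ℂ) ^ ((1:ℂ)/2) = ((Real.sqrt (2 * π) : ℝ) : ℂ) := by
    rw [show ((1:ℂ)/2) = (((1/2 : ℝ) : ℂ)) by norm_num,
      ← Complex.ofReal_cpow (by positivity)]
    norm_num [Real.sqrt_eq_rpow]
  rw [h2, h4, ← mul_assoc, inv_mul_cancel₀ (Complex.ofReal_ne_zero.mpr (by positivity)), one_mul]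
  congr 1
  push_cast
  ring

lemma charGaussPi : ∀ (n : ℕ) (w : Fin n → ℝ),
    ∫ r : Fin n → ℝ, Complex.exp (((∑ i, w i * r i : ℝ) : ℂ) * Complex.I)
        ∂(Measure.pi fun _ : Fin n => gaussianReal 0 1)
      = Complex.exp (-((∑ i, w i ^ 2 : ℝ) : ℂ) / 2) := by
  intro n
  induction n with
  | zero =>
      intro w
      simp [integral_const]
  | succ n ih =>
      intro w
      have h := measurePreserving_piFinSuccAbove
        (fun _ : Fin (n+1) => gaussianReal 0 1) 0
      have he := (MeasurableEquiv.piFinSuccAbove (fun _ : Fin (n+1) => ℝ) 0).measurableEmbedding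
      set G : ℝ × (Fin n → ℝ) → ℂ := fun p =>
        Complex.exp (((w 0 * p.1 : ℝ) : ℂ) * Complex.I) *
          Complex.exp (((∑ i : Fin n, w i.succ * p.2 i : ℝ) : ℂ) * Complex.I) with hG
      have hcomp : ∀ r : Fin (n+1) → ℝ,
          Complex.exp (((∑ i, w i * r i : ℝ) : ℂ) * Complex.I)
            = G (MeasurableEquiv.piFinSuccAbove (fun _ : Fin (n+1) => ℝ) 0 r) := by
        intro r
        simp only [hG, MeasurableEquiv.piFinSuccAbove, MeasurableEquiv.coe_mk,
          Fin.insertNthEquiv, Fin.removeNth]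
        rw [← Complex.exp_add, Fin.sum_univ_succ]
        push_cast
        simp [Fin.succAbove_zero, add_mul, Fin.tail]
      calc ∫ r : Fin (n+1) → ℝ, Complex.exp (((∑ i, w i * r i : ℝ) : ℂ) * Complex.I)
              ∂(Measure.pi fun _ : Fin (n+1) => gaussianReal 0 1)
          = ∫ r : Fin (n+1) → ℝ,
              G (MeasurableEquiv.piFinSuccAbove (fun _ : Fin (n+1) => ℝ) 0 r)
              ∂(Measure.pi fun _ : Fin (n+1) => gaussianReal 0 1) := by
            simp_rw [hcomp]
        _ = ∫ p, G p ∂((gaussianReal 0 1).prod (Measure.pi fun _ : Fin n => gaussianReal 0 1)) := by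
            exact h.integral_comp he G
        _ = Complex.exp (-((w 0 ^ 2 : ℝ) : ℂ) / 2) *
              Complex.exp (-((∑ i : Fin n, w i.succ ^ 2 : ℝ) : ℂ) / 2) := by
            rw [hG]
            simp only []
            rw [integral_prod_mul
              (f := fun x : ℝ => Complex.exp (((w 0 * x : ℝ) : ℂ) * Complex.I))
              (g := fun y : Fin n → ℝ =>
                Complex.exp (((∑ i : Fin n, w i.succ * y i : ℝ) : ℂ) * Complex.I))]
            rw [charGauss1 (w 0), ih (fun i => w i.succ)]
        _ = Complex.exp (-((∑ i, w i ^ 2 : ℝ) : ℂ) / 2) := by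
            rw [← Complex.exp_add, Fin.sum_univ_succ]
            push_cast
            ring_nf

lemma integrable_cexp_pi (n : ℕ) (w : Fin n → ℝ) :
    Integrable (fun r : Fin n → ℝ => Complex.exp (((∑ i, w i * r i : ℝ) : ℂ) * Complex.I))
      (Measure.pi fun _ : Fin n => gaussianReal 0 1) := by
  have hmeas : Continuous fun r : Fin n → ℝ => (∑ i, w i * r i) :=
    continuous_finset_sum _ fun i _ => continuous_const.mul (continuous_apply i)
  refine (integrable_const (1:ℝ)).mono' ?_ ?_
  · exact (Complex.continuous_exp.comp
      ((Complex.continuous_ofReal.comp hmeas).mul continuous_const)).aestronglyMeasurable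
  · filter_upwards with r
    rw [Complex.norm_exp_ofReal_mul_I]

lemma intCosPi (n : ℕ) (w : Fin n → ℝ) :
    ∫ r : Fin n → ℝ, Real.cos (∑ i, w i * r i)
        ∂(Measure.pi fun _ : Fin n => gaussianReal 0 1)
      = Real.exp (-(∑ i, w i ^ 2) / 2) := by
  have h1 : ∀ r : Fin n → ℝ, Real.cos (∑ i, w i * r i)
      = (Complex.exp (((∑ i, w i * r i : ℝ) : ℂ) * Complex.I)).re := fun r =>
    (Complex.exp_ofReal_mul_I_re _).symm
  simp_rw [h1]
  have h2 := Complex.reCLM.integral_comp_comm (integrable_cexp_pi n w)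
  simp only [Complex.reCLM_apply] at h2
  rw [h2, charGaussPi n w]
  rw [show -((∑ i, w i ^ 2 : ℝ) : ℂ) / 2 = (((-(∑ i, w i ^ 2) / 2 : ℝ)) : ℂ) by push_cast; ring]
  rw [Complex.exp_ofReal_re]

lemma integrable_cos_pi (n : ℕ) (w : Fin n → ℝ) :
    Integrable (fun r : Fin n → ℝ => Real.cos (∑ i, w i * r i))
      (Measure.pi fun _ : Fin n => gaussianReal 0 1) := by
  have hmeas : Continuous fun r : Fin n → ℝ => (∑ i, w i * r i) :=
    continuous_finset_sum _ fun i _ => continuous_const.mul (continuous_apply i)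
  refine (integrable_const (1:ℝ)).mono' (Real.continuous_cos.comp hmeas).aestronglyMeasurable ?_
  filter_upwards with r
  exact Real.abs_cos_le_one _

theorem integral_cos_proj_mul_cos_proj_eq_fRBF'
    {D : ℕ} (u v : Fin D → ℝ)
    (hu : Real.sqrt (∑ i, u i ^ 2) = 1) (hv : Real.sqrt (∑ i, v i ^ 2) = 1)
    (ρ : ℝ) (hρ : ρ = ∑ i, u i * v i) {γ : ℝ} (hγ : 0 ≤ γ) :
    ∫ r : Fin D → ℝ,
        Real.cos (Real.sqrt γ * ∑ i, u i * r i) *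
          Real.cos (Real.sqrt γ * ∑ i, v i * r i)
        ∂(Measure.pi fun _ : Fin D => gaussianReal 0 1)
      = (1 / 2) * Real.exp (-γ * (1 - ρ)) + (1 / 2) * Real.exp (-γ * (1 + ρ)) := by
  have hu0 : (0:ℝ) ≤ ∑ i, u i ^ 2 := Finset.sum_nonneg fun i _ => sq_nonneg _
  have hv0 : (0:ℝ) ≤ ∑ i, v i ^ 2 := Finset.sum_nonneg fun i _ => sq_nonneg _
  have hu1 : (∑ i, u i ^ 2) = 1 := by
    have := Real.sq_sqrt hu0; rw [hu] at this; simpa using this.symm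
  have hv1 : (∑ i, v i ^ 2) = 1 := by
    have := Real.sq_sqrt hv0; rw [hv] at this; simpa using this.symm
  set w₁ : Fin D → ℝ := fun i => Real.sqrt γ * (u i + v i) with hw₁
  set w₂ : Fin D → ℝ := fun i => Real.sqrt γ * (u i - v i) with hw₂
  have hpt : ∀ r : Fin D → ℝ,
      Real.cos (Real.sqrt γ * ∑ i, u i * r i) * Real.cos (Real.sqrt γ * ∑ i, v i * r i)
        = (1/2) * Real.cos (∑ i, w₁ i * r i) + (1/2) * Real.cos (∑ i, w₂ i * r i) := by
    intro r
    have e1 : ∑ i, w₁ i * r i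
        = Real.sqrt γ * ∑ i, u i * r i + Real.sqrt γ * ∑ i, v i * r i := by
      rw [Finset.mul_sum, Finset.mul_sum, ← Finset.sum_add_distrib]
      exact Finset.sum_congr rfl fun i _ => by rw [hw₁]; ring
    have e2 : ∑ i, w₂ i * r i
        = Real.sqrt γ * ∑ i, u i * r i - Real.sqrt γ * ∑ i, v i * r i := by
      rw [Finset.mul_sum, Finset.mul_sum, ← Finset.sum_sub_distrib]
      exact Finset.sum_congr rfl fun i _ => by rw [hw₂]; ring
    rw [e1, e2, Real.cos_add, Real.cos_sub]
    ring
  simp_rw [hpt]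
  rw [integral_add ((integrable_cos_pi D w₁).const_mul _) ((integrable_cos_pi D w₂).const_mul _),
    integral_const_mul, integral_const_mul, intCosPi, intCosPi]
  have hsq : Real.sqrt γ ^ 2 = γ := Real.sq_sqrt hγ
  have s1 : ∑ i, w₁ i ^ 2 = γ * (2 + 2 * ρ) := by
    have : ∀ i ∈ Finset.univ, w₁ i ^ 2 = γ * (u i ^ 2 + 2 * (u i * v i) + v i ^ 2) := by
      intro i _; rw [hw₁, mul_pow, hsq]; ring
    rw [Finset.sum_congr rfl this, ← Finset.mul_sum, Finset.sum_add_distrib,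
      Finset.sum_add_distrib, ← Finset.mul_sum, hu1, hv1, ← hρ]
    ring
  have s2 : ∑ i, w₂ i ^ 2 = γ * (2 - 2 * ρ) := by
    have : ∀ i ∈ Finset.univ, w₂ i ^ 2 = γ * (u i ^ 2 - 2 * (u i * v i) + v i ^ 2) := by
      intro i _; rw [hw₂, mul_pow, hsq]; ring
    rw [Finset.sum_congr rfl this, ← Finset.mul_sum, Finset.sum_add_distrib,
      Finset.sum_sub_distrib, ← Finset.mul_sum, hu1, hv1, ← hρ]
    ring
  rw [s1, s2, show -(γ * (2 + 2 * ρ)) / 2 = -γ * (1 + ρ) by ring,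
    show -(γ * (2 - 2 * ρ)) / 2 = -γ * (1 - ρ) by ring, add_comm]

theorem integral_cos_proj_mul_cos_proj_eq_fRBF
    {D : ℕ} (u v : Fin D → ℝ)
    (hu : Real.sqrt (∑ i, u i ^ 2) = 1) (hv : Real.sqrt (∑ i, v i ^ 2) = 1)
    (ρ : ℝ) (hρ : ρ = ∑ i, u i * v i) {γ : ℝ} (hγ : 0 ≤ γ) :
    ∫ r : Fin D → ℝ,
        Real.cos (Real.sqrt γ * ∑ i, u i * r i) *
          Real.cos (Real.sqrt γ * ∑ i, v i * r i)
        ∂(Measure.pi fun _ : Fin D => gaussianReal 0 1)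
      = fRBF γ ρ := by
  unfold fRBF
  exact integral_cos_proj_mul_cos_proj_eq_fRBF' u v hu hv ρ hρ hγ
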